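/- In the succinct g-Strahler (n,h)-universal tree, for every height j and every 0 ≤ k ≤ g, the set of depth-(h−j) subtrees that are succinct k-Strahler universal trees forms a chain under embeddability: if r₁, r₂ are vertices at depth h−j each having exactly g−k nonempty bit strings and |r₁| ≥ |r₂|, then the subtree rooted at r₁ embeds into the subtree rooted at r₂. Consequently the distinct depth-(h−j) subtrees are covered by at most g+1 chains. -/
import Mathlib


/-- Binary strings. -/
abbrev BStr := List Bool

/-- The linear order on finite binary strings: `0s < ε < 1s'` and `bs < bs' ↔ s < s'`. -/
def slt : BStr → BStr → Prop
  | [], [] => False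
  | false :: _, [] => True
  | true :: _, [] => False
  | [], true :: _ => True
  | [], false :: _ => False
  | false :: _, true :: _ => True
  | true :: _, false :: _ => False
  | false :: s, false :: t => slt s t
  | true :: s, true :: t => slt s t

/-- Total number of bits in a tuple of binary strings. -/
def bits (v : List BStr) : ℕ := (v.map List.length).sum

/-- Number of nonempty strings in a tuple. -/
def neCount (v : List BStr) : ℕ := (v.filter (fun s => !s.isEmpty)).length

/-- Number of non-leading bits in a tuple (each nonempty string contributes all its bits
except the leading one). -/
def nlBits (v : List BStr) : ℕ := (v.map (fun s => s.length - 1)).sum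

/-- Vertices of the succinct `k`-Strahler universal tree of height `j` with non-leading-bit
budget `b`: tuples of at most `j` binary strings with at most `k` nonempty strings and at
most `b` non-leading bits, completable to a leaf with exactly `k` nonempty strings, and
satisfying the two structural conditions of Daviaud–Jurdziński–Thejaswini:
(a) if a proper prefix has fewer than `k` nonempty strings and already uses all `b`
non-leading bits, the next string is `0`; (b) any prefix consisting solely of nonempty
strings has all its strings starting with `0`. -/
def StVerts (k b j : ℕ) : Set (List BStr) :=
  {v | v.length ≤ j ∧ neCount v ≤ k ∧ nlBits v ≤ b ∧ k - neCount v ≤ j - v.length ∧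
    (∀ u a, u ++ [a] <+: v → neCount u < k → nlBits u = b → a = [false]) ∧
    (∀ u, u <+: v → (∀ s ∈ u, s ≠ ([] : BStr)) → ∀ s ∈ u, s.head? = some false)}

/-- Edges (child relation) of the succinct `k`-Strahler tree. -/
def StEdge (k b j : ℕ) (u v : List BStr) : Prop :=
  u ∈ StVerts k b j ∧ v ∈ StVerts k b j ∧ ∃ a : BStr, v = u ++ [a]

/-- Leaves of the succinct `k`-Strahler tree: vertices with no child. -/
def StLeaf (k b j : ℕ) (v : List BStr) : Prop :=
  v ∈ StVerts k b j ∧ ∀ a : BStr, v ++ [a] ∉ StVerts k b j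

/-- Embeddability of succinct Strahler trees: an injective, order-preserving
homomorphism mapping edges to edges and leaves to leaves. -/
def StEmbeds (k b j k' b' j' : ℕ) : Prop :=
  ∃ f : List BStr → List BStr,
    (∀ v ∈ StVerts k b j, f v ∈ StVerts k' b' j') ∧
    Set.InjOn f (StVerts k b j) ∧
    (∀ u v, StEdge k b j u v → StEdge k' b' j' (f u) (f v)) ∧
    (∀ u ∈ StVerts k b j, ∀ v ∈ StVerts k b j,
      List.Lex slt u v → List.Lex slt (f u) (f v)) ∧
    (∀ v, StLeaf k b j v → StLeaf k' b' j' (f v))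

/-- In the succinct `g`-Strahler `(n,h)`-universal tree, for every height
`j` and every `k ≤ g`, the depth-`(h-j)` subtrees that are succinct `k`-Strahler universal
trees form a chain under embeddability: if `r₁, r₂` are vertices at depth `h - j`, each
with exactly `g - k` nonempty strings, and `|r₁| ≥ |r₂|`, then the subtree rooted at `r₁`
(a succinct `k`-Strahler tree with non-leading-bit budget `⌊log n⌋ - nlBits r₁`) embeds
into the subtree rooted at `r₂`.  Consequently, for each `k` the corresponding subtrees
are pairwise comparable, so the distinct depth-`(h-j)` subtrees are covered by at most
`g + 1` chains (one for each `0 ≤ k ≤ g`). -/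

lemma neCount_append (u t : List BStr) : neCount (u ++ t) = neCount u + neCount t := by
  simp [neCount, List.filter_append]

lemma nlBits_append (u t : List BStr) : nlBits (u ++ t) = nlBits u + nlBits t := by
  simp [nlBits]

lemma bits_eq (v : List BStr) : bits v = nlBits v + neCount v := by
  induction v with
  | nil => rfl
  | cons s v ih =>
    cases s with
    | nil => simpa [bits, nlBits, neCount, List.filter_cons] using ih
    | cons a s =>
      simp [bits, nlBits, neCount, List.filter_cons] at *
      omega

lemma StVerts_mono {k b₁ b₂ j : ℕ} (hb : b₁ ≤ b₂) : StVerts k b₁ j ⊆ StVerts k b₂ j := by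
  intro v hv
  obtain ⟨h1, h2, h3, h4, h5, h6⟩ := hv
  refine ⟨h1, h2, h3.trans hb, h4, ?_, h6⟩
  intro u a hpre hne hnl
  apply h5 u a hpre hne
  have hle : nlBits (u ++ [a]) ≤ nlBits v := by
    obtain ⟨t, ht⟩ := hpre
    simp only [← ht, nlBits_append]; omega
  rw [nlBits_append] at hle
  omega

lemma leaf_length {k b j : ℕ} {v : List BStr} (hl : StLeaf k b j v) : v.length = j := by
  obtain ⟨hv, hch⟩ := hl
  obtain ⟨h1, h2, h3, h4, h5, h6⟩ := hv
  by_contra hlen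
  have hlt : v.length < j := lt_of_le_of_ne h1 hlen
  have hone : neCount [([false] : BStr)] = 1 := rfl
  have hzero : neCount [([] : BStr)] = 0 := rfl
  have hnl1 : nlBits [([false] : BStr)] = 0 := rfl
  have hnl0 : nlBits [([] : BStr)] = 0 := rfl
  by_cases hne : neCount v < k
  · refine hch [false] ?_
    refine ⟨by simp; omega, ?_, ?_, ?_, ?_, ?_⟩
    · rw [neCount_append, hone]; omega
    · rw [nlBits_append, hnl1]; omega
    · rw [neCount_append, hone]
      simp only [List.length_append, List.length_cons, List.length_nil]
      omega
    · intro u a hpre hneu hnlu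
      rcases List.prefix_concat_iff.mp hpre with heq | hpre'
      · have := List.append_inj' heq rfl
        have ha : a = [false] := by
          have h2' := this.2; simpa using h2'
        exact ha
      · exact h5 u a hpre' hneu hnlu
    · intro u hpre hne' s hs
      rcases List.prefix_concat_iff.mp hpre with heq | hpre'
      · subst heq
        rcases List.mem_append.mp hs with hs | hs
        · exact h6 v List.prefix_rfl (fun t ht => hne' t (List.mem_append_left _ ht)) s hs
        · simp at hs; subst hs; rfl
      · exact h6 u hpre' hne' s hs
  · refine hch [] ?_
    refine ⟨by simp; omega, ?_, ?_, ?_, ?_, ?_⟩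
    · rw [neCount_append, hzero]; omega
    · rw [nlBits_append, hnl0]; omega
    · rw [neCount_append, hzero]
      simp only [List.length_append, List.length_cons, List.length_nil]
      omega
    · intro u a hpre hneu hnlu
      rcases List.prefix_concat_iff.mp hpre with heq | hpre'
      · have hu : u = v := (List.append_inj' heq rfl).1
        rw [hu] at hneu; omega
      · exact h5 u a hpre' hneu hnlu
    · intro u hpre hne' s hs
      rcases List.prefix_concat_iff.mp hpre with heq | hpre'
      · subst heq
        exact absurd rfl (hne' [] (List.mem_append_right _ (by simp)))
      · exact h6 u hpre' hne' s hs

lemma StEmbeds_of_le {k j b₁ b₂ : ℕ} (hb : b₁ ≤ b₂) : StEmbeds k b₁ j k b₂ j := by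
  refine ⟨fun v => v, fun v hv => StVerts_mono hb hv, fun a _ b _ h => h, ?_, fun u _ v _ h => h, ?_⟩
  · rintro u v ⟨hu, hv, a, rfl⟩
    exact ⟨StVerts_mono hb hu, StVerts_mono hb hv, a, rfl⟩
  · rintro v hlv
    have hlen := leaf_length hlv
    refine ⟨StVerts_mono hb hlv.1, fun a hva => ?_⟩
    have h1 := hva.1
    simp at h1
    omega

theorem stmt_11 (n h j g k : ℕ) (hk : k ≤ g) (hj : j ≤ h) (r₁ r₂ : List BStr)
    (hr₁ : r₁ ∈ StVerts g (Nat.log 2 n) h) (hr₂ : r₂ ∈ StVerts g (Nat.log 2 n) h)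
    (hd₁ : r₁.length = h - j) (hd₂ : r₂.length = h - j)
    (hne₁ : neCount r₁ = g - k) (hne₂ : neCount r₂ = g - k)
    (hsz : bits r₂ ≤ bits r₁) :
    StEmbeds k (Nat.log 2 n - nlBits r₁) j k (Nat.log 2 n - nlBits r₂) j ∧
    (∀ b₁ b₂ : ℕ, StEmbeds k b₁ j k b₂ j ∨ StEmbeds k b₂ j k b₁ j) := by
  have hnl : nlBits r₂ ≤ nlBits r₁ := by
    have e1 := bits_eq r₁
    have e2 := bits_eq r₂
    omega
  refine ⟨StEmbeds_of_le (Nat.sub_le_sub_left hnl _), fun b₁ b₂ => ?_⟩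
  rcases le_total b₁ b₂ with h | h
  · exact Or.inl (StEmbeds_of_le h)
  · exact Or.inr (StEmbeds_of_le h)
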